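/- arXiv:2309.12105 — 2 statements merged into one kernel-verified Lean document; each statement's English description precedes it below -/
import Mathlib

section
/- Coercivity of the bilinear form: For all (u,w) ∈ U it holds B((u,w),(u,w)) ≥ ‖w‖²_{L²} + (β²/2)‖u'‖²_{L²} + δ‖u‖²_{L²} = |||(u,w)|||². -/
open Set MeasureTheory

/-- The L² norm of `f` over the interval `(a,b)`. -/
noncomputable def L2 (f : ℝ → ℝ) (a b : ℝ) : ℝ := Real.sqrt (∫ x in a..b, (f x)^2)

/-- The bilinear form `B((u,w),(y,z))` of the mixed variational formulation of the
singularly perturbed fourth-order problem with a shift on `Ω = (0,2)`. -/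
noncomputable def Bform (ε : ℝ) (b c d : ℝ → ℝ) (u w y z : ℝ → ℝ) : ℝ :=
  -(ε * ∫ x in (0:ℝ)..2, deriv w x * deriv y x)
    + (∫ x in (0:ℝ)..2, b x * deriv u x * deriv y x)
    + (∫ x in (0:ℝ)..2, deriv b x * deriv u x * y x)
    + (∫ x in (0:ℝ)..2, c x * u x * y x)
    + (∫ x in (1:ℝ)..2, d x * u (x - 1) * y x)
    + ε * (∫ x in (0:ℝ)..2, deriv u x * deriv z x)
    + (∫ x in (0:ℝ)..2, w x * z x)

lemma pointA (β δ Md Mb' bx b'x cx t s : ℝ) (hβ : 0 < β)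
    (h1 : β^2 ≤ bx) (h2 : |b'x| ≤ Mb') (h3 : δ ≤ cx - Md/2 - Mb'^2/(2*β^2)) :
    β^2/2 * t^2 + δ * s^2 + Md/2 * s^2 ≤ bx * t * t + b'x * t * s + cx * s * s := by
  have hM : 0 ≤ Mb' := (abs_nonneg _).trans h2
  have hy : -(Mb' * |t| * |s|) ≤ b'x * t * s := by
    have h1' : |b'x * t * s| ≤ Mb' * |t| * |s| := by
      rw [abs_mul, abs_mul]
      gcongr
    linarith [neg_abs_le (b'x * t * s)]
  have hb2 : (0:ℝ) < 2*β^2 := by positivity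
  have hy2 : Mb' * |t| * |s| ≤ β^2/2 * t^2 + Mb'^2/(2*β^2) * s^2 := by
    have ht := sq_abs t
    have hs := sq_abs s
    have e : β^2/2 * t^2 + Mb'^2/(2*β^2) * s^2 - Mb' * |t| * |s|
        = (β^2*|t| - Mb'*|s|)^2/(2*β^2) := by
      field_simp
      ring_nf
      rw [ht, hs]
    nlinarith [div_nonneg (sq_nonneg (β^2*|t| - Mb'*|s|)) hb2.le]
  have h3' : δ + Md/2 + Mb'^2/(2*β^2) ≤ cx := by linarith
  nlinarith [mul_le_mul_of_nonneg_right h1 (sq_nonneg t),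
    mul_le_mul_of_nonneg_right h3' (sq_nonneg s), sq_nonneg t, sq_nonneg s]

lemma pointB (Md dx a b : ℝ) (h : |dx| ≤ Md) :
    -(Md/2 * (a^2 + b^2)) ≤ dx * a * b := by
  have hM : 0 ≤ Md := (abs_nonneg _).trans h
  have h1 : |dx * a * b| ≤ Md * |a| * |b| := by
    rw [abs_mul, abs_mul]
    gcongr
  have h2 : |a| * |b| ≤ (a^2 + b^2)/2 := by
    nlinarith [sq_nonneg (|a| - |b|), sq_abs a, sq_abs b]
  have := neg_abs_le (dx * a * b)
  nlinarith [abs_nonneg a, abs_nonneg b]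

/-- Coercivity of the bilinear form: for every `(u,w)` in
`U = H¹₀(0,2) × H¹(0,2)` (m = 1) resp. `U = H¹₀(0,2) × H¹₀(0,2)` (m = 2),
`B((u,w),(u,w)) ≥ ‖w‖² + β²/2 ‖u'‖² + δ ‖u‖² = |||(u,w)|||²`. -/
theorem coercivity_of_B
    (ε β δ Md Mb' : ℝ) (b c d : ℝ → ℝ) (m : ℕ) (hm : m = 1 ∨ m = 2)
    (hε : 0 < ε) (hβ : 0 < β) (hδ : 0 < δ)
    (hb : ContDiff ℝ (⊤:ℕ∞) b) (hc : ContDiff ℝ (⊤:ℕ∞) c) (hd : ContDiff ℝ (⊤:ℕ∞) d)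
    (hbβ : ∀ x ∈ Icc (0:ℝ) 2, β^2 ≤ b x)
    (hdM : ∀ x ∈ Icc (1:ℝ) 2, |d x| ≤ Md)
    (hb'M : ∀ x ∈ Icc (0:ℝ) 2, |deriv b x| ≤ Mb')
    (hcδ : ∀ x ∈ Icc (0:ℝ) 2, δ ≤ c x - Md/2 - Mb'^2/(2*β^2))
    (u w : ℝ → ℝ) (hu : ContDiff ℝ (1:ℕ) u) (hw : ContDiff ℝ (1:ℕ) w)
    (hu0 : u 0 = 0) (hu2 : u 2 = 0)
    (hwbc : m = 2 → w 0 = 0 ∧ w 2 = 0) :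
    (L2 w 0 2)^2 + β^2/2 * (L2 (deriv u) 0 2)^2 + δ * (L2 u 0 2)^2
      ≤ Bform ε b c d u w u w := by
  -- continuity facts
  have cu : Continuous u := hu.continuous
  have cw : Continuous w := hw.continuous
  have cu' : Continuous (deriv u) := hu.continuous_deriv (by norm_num)
  have cb : Continuous b := hb.continuous
  have cb' : Continuous (deriv b) := hb.continuous_deriv (by exact_mod_cast le_top)
  have cc : Continuous c := hc.continuous
  have cd : Continuous d := hd.continuous
  have cus : Continuous (fun x => u (x - 1)) := cu.comp (continuous_id.sub continuous_const)
  -- nonnegativity of the squared integrals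
  have hInw : (0:ℝ) ≤ ∫ x in (0:ℝ)..2, (w x)^2 :=
    intervalIntegral.integral_nonneg (by norm_num) (fun x _ => sq_nonneg _)
  have hInu' : (0:ℝ) ≤ ∫ x in (0:ℝ)..2, (deriv u x)^2 :=
    intervalIntegral.integral_nonneg (by norm_num) (fun x _ => sq_nonneg _)
  have hInu : (0:ℝ) ≤ ∫ x in (0:ℝ)..2, (u x)^2 :=
    intervalIntegral.integral_nonneg (by norm_num) (fun x _ => sq_nonneg _)
  simp only [L2, Real.sq_sqrt hInw, Real.sq_sqrt hInu', Real.sq_sqrt hInu, Bform]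
  -- the two ε-terms cancel
  have hcancel : (∫ x in (0:ℝ)..2, deriv w x * deriv u x)
      = ∫ x in (0:ℝ)..2, deriv u x * deriv w x := by
    simp [mul_comm]
  -- last term equals ∫ w²
  have hlast : (∫ x in (0:ℝ)..2, w x * w x) = ∫ x in (0:ℝ)..2, (w x)^2 := by
    simp [pow_two]
  -- main estimate on (0,2)
  have hA : (∫ x in (0:ℝ)..2, (β^2/2 * (deriv u x)^2 + δ * (u x)^2 + Md/2 * (u x)^2))
      ≤ ∫ x in (0:ℝ)..2,
        (b x * deriv u x * deriv u x + deriv b x * deriv u x * u x + c x * u x * u x) := by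
    apply intervalIntegral.integral_mono_on (by norm_num)
    · exact (((continuous_const.mul (cu'.pow 2)).add
        (continuous_const.mul (cu.pow 2))).add
        (continuous_const.mul (cu.pow 2))).intervalIntegrable _ _
    · exact ((((cb.mul cu').mul cu').add ((cb'.mul cu').mul cu)).add
        ((cc.mul cu).mul cu)).intervalIntegrable _ _
    · intro x hx
      exact pointA β δ Md Mb' (b x) (deriv b x) (c x) (deriv u x) (u x) hβ
        (hbβ x hx) (hb'M x hx) (hcδ x hx)
  -- split the LHS of hA
  have hAsplit : (∫ x in (0:ℝ)..2, (β^2/2 * (deriv u x)^2 + δ * (u x)^2 + Md/2 * (u x)^2))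
      = β^2/2 * (∫ x in (0:ℝ)..2, (deriv u x)^2) + δ * (∫ x in (0:ℝ)..2, (u x)^2)
        + Md/2 * (∫ x in (0:ℝ)..2, (u x)^2) := by
    rw [intervalIntegral.integral_add, intervalIntegral.integral_add,
      intervalIntegral.integral_const_mul, intervalIntegral.integral_const_mul,
      intervalIntegral.integral_const_mul]
    · exact (continuous_const.mul (cu'.pow 2)).intervalIntegrable _ _
    · exact (continuous_const.mul (cu.pow 2)).intervalIntegrable _ _
    · exact ((continuous_const.mul (cu'.pow 2)).add
        (continuous_const.mul (cu.pow 2))).intervalIntegrable _ _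
    · exact (continuous_const.mul (cu.pow 2)).intervalIntegrable _ _
  -- split the RHS of hA into the three Bform integrals
  have hBsplit : (∫ x in (0:ℝ)..2,
        (b x * deriv u x * deriv u x + deriv b x * deriv u x * u x + c x * u x * u x))
      = (∫ x in (0:ℝ)..2, b x * deriv u x * deriv u x)
        + (∫ x in (0:ℝ)..2, deriv b x * deriv u x * u x)
        + (∫ x in (0:ℝ)..2, c x * u x * u x) := by
    rw [intervalIntegral.integral_add, intervalIntegral.integral_add]
    · exact ((cb.mul cu').mul cu').intervalIntegrable _ _
    · exact ((cb'.mul cu').mul cu).intervalIntegrable _ _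
    · exact (((cb.mul cu').mul cu').add ((cb'.mul cu').mul cu)).intervalIntegrable _ _
    · exact ((cc.mul cu).mul cu).intervalIntegrable _ _
  -- estimate on the shift term
  have hShiftLB : -(Md/2 * ((∫ x in (1:ℝ)..2, (u (x-1))^2) + ∫ x in (1:ℝ)..2, (u x)^2))
      ≤ ∫ x in (1:ℝ)..2, d x * u (x - 1) * u x := by
    have h := intervalIntegral.integral_mono_on (μ := volume) (a := (1:ℝ)) (b := (2:ℝ)) (by norm_num)
      (f := fun x => -(Md/2 * ((u (x-1))^2 + (u x)^2)))
      (g := fun x => d x * u (x - 1) * u x)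
      (((continuous_const.mul ((cus.pow 2).add (cu.pow 2))).neg).intervalIntegrable _ _)
      (((cd.mul cus).mul cu).intervalIntegrable _ _)
      (fun x hx => pointB Md (d x) (u (x-1)) (u x) (hdM x hx))
    calc -(Md/2 * ((∫ x in (1:ℝ)..2, (u (x-1))^2) + ∫ x in (1:ℝ)..2, (u x)^2))
        = ∫ x in (1:ℝ)..2, -(Md/2 * ((u (x-1))^2 + (u x)^2)) := by
          rw [intervalIntegral.integral_neg, intervalIntegral.integral_const_mul,
            intervalIntegral.integral_add (f := fun x => (u (x-1))^2) (g := fun x => (u x)^2)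
              ((cus.pow 2).intervalIntegrable _ _)
              ((cu.pow 2).intervalIntegrable _ _)]
      _ ≤ _ := h
  -- the shifted square integral
  have hshift_eq : (∫ x in (1:ℝ)..2, (u (x-1))^2) = ∫ x in (0:ℝ)..1, (u x)^2 := by
    have := intervalIntegral.integral_comp_sub_right (a := (1:ℝ)) (b := 2)
      (fun x => (u x)^2) 1
    norm_num at this
    exact this
  -- split ∫₀² u² as ∫₀¹ + ∫₁²
  have hsplit : (∫ x in (0:ℝ)..1, (u x)^2) + (∫ x in (1:ℝ)..2, (u x)^2)
      = ∫ x in (0:ℝ)..2, (u x)^2 :=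
    intervalIntegral.integral_add_adjacent_intervals
      ((cu.pow 2).intervalIntegrable _ _) ((cu.pow 2).intervalIntegrable _ _)
  rw [hcancel, hlast]
  rw [hAsplit, hBsplit] at hA
  rw [hshift_eq, hsplit] at hShiftLB
  linarith [hA, hShiftLB]
end

section
/- Error estimation lemma: With (η_u,η_w) = (u − I₁u, w − I₂w) the interpolation errors and (ξ_u,ξ_w) = (u_h − I₁u, w_h − I₂w) ∈ U_h the discrete errors, it holds B((η_u,η_w),(ξ_u,ξ_w)) ≲ (‖η_u‖_{L²} + ‖η_w‖_{L²} + ‖b − b̄‖_{L∞}‖η_u'‖_{L²}) · |||(ξ_u,ξ_w)|||, where b̄ is the cell-wise average of b. -/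
open Set

/-- The square of the energy norm `|||(u,w)|||² = ‖w‖² + β²/2 ‖u'‖² + δ ‖u‖²`. -/
noncomputable def energySq (β δ : ℝ) (u w : ℝ → ℝ) : ℝ :=
  (∫ x in (0:ℝ)..2, (w x)^2) + β^2/2 * (∫ x in (0:ℝ)..2, (deriv u x)^2)
    + δ * (∫ x in (0:ℝ)..2, (u x)^2)

/-- Membership in the space `U` (`H¹₀(Ω) × H¹(Ω)` for `m = 1`,
`H¹₀(Ω) × H¹₀(Ω)` for `m = 2`). -/
def MemU (m : ℕ) (u w : ℝ → ℝ) : Prop :=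
  ContinuousOn u (Icc 0 2) ∧ ContinuousOn w (Icc 0 2) ∧
    u 0 = 0 ∧ u 2 = 0 ∧ (m = 2 → w 0 = 0 ∧ w 2 = 0)

/-- `v` is a piecewise polynomial of degree at most `q` on the mesh given by `nodes`. -/
def PiecewisePoly (q N : ℕ) (nodes : ℕ → ℝ) (v : ℝ → ℝ) : Prop :=
  ∀ i < N, ∃ p : Polynomial ℝ, p.natDegree ≤ q ∧
    ∀ x ∈ Icc (nodes i) (nodes (i+1)), v x = Polynomial.eval x p

/-- `Iv` is the cell-wise interpolant of `v`: a continuous piecewise polynomial of degree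
at most `q` matching the values of `v` at all mesh nodes, whose error is cell-wise
L²-orthogonal to polynomials of degree at most `q-2`. -/
def Interpolates (q N : ℕ) (nodes : ℕ → ℝ) (v Iv : ℝ → ℝ) : Prop :=
  PiecewisePoly q N nodes Iv ∧ ContinuousOn Iv (Icc (nodes 0) (nodes N)) ∧
    (∀ i ≤ N, Iv (nodes i) = v (nodes i)) ∧
    ∀ i < N, ∀ ξ : Polynomial ℝ, ξ.natDegree + 2 ≤ q →
      ∫ x in (nodes i)..(nodes (i+1)), (v x - Iv x) * Polynomial.eval x ξ = 0

section Helpers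
open MeasureTheory intervalIntegral Polynomial

lemma ae_ne_pt (b : ℝ) : ∀ᵐ x : ℝ ∂volume, x ≠ b := by
  rw [MeasureTheory.ae_iff]
  have : {x : ℝ | ¬ x ≠ b} = {b} := by ext x; simp
  rw [this]; exact Real.volume_singleton

lemma ae_uIoc_of_Ioo {a b : ℝ} (hab : a ≤ b) {f g : ℝ → ℝ}
    (h : ∀ x ∈ Ioo a b, f x = g x) :
    ∀ᵐ x ∂(volume : Measure ℝ), x ∈ Set.uIoc a b → f x = g x := by
  filter_upwards [ae_ne_pt b] with x hx hmem
  rw [Set.uIoc_of_le hab] at hmem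
  exact h x ⟨hmem.1, lt_of_le_of_ne hmem.2 hx⟩

lemma II_congr_Ioo {a b : ℝ} (hab : a ≤ b) {f g : ℝ → ℝ}
    (h : ∀ x ∈ Ioo a b, f x = g x) (hg : IntervalIntegrable g volume a b) :
    IntervalIntegrable f volume a b := by
  have h' : ∀ᵐ x ∂(volume : Measure ℝ), x ∈ Set.uIoc a b → g x = f x := by
    filter_upwards [ae_uIoc_of_Ioo hab h] with x hx hm using (hx hm).symm
  rw [intervalIntegrable_iff] at hg ⊢
  exact hg.congr_fun_ae ((ae_restrict_iff' measurableSet_uIoc).mpr h')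

lemma intInt_congr_Ioo {a b : ℝ} (hab : a ≤ b) {f g : ℝ → ℝ}
    (h : ∀ x ∈ Ioo a b, f x = g x) :
    ∫ x in a..b, f x = ∫ x in a..b, g x :=
  intervalIntegral.integral_congr_ae (ae_uIoc_of_Ioo hab h)

lemma hasDerivAt_of_Icc {a b : ℝ} {f : ℝ → ℝ} {p : Polynomial ℝ}
    (hf : ∀ x ∈ Icc a b, f x = p.eval x) {x : ℝ} (hx : x ∈ Ioo a b) :
    HasDerivAt f (p.derivative.eval x) x := by
  have hev : f =ᶠ[nhds x] (fun y => p.eval y) :=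
    Filter.eventuallyEq_of_mem (Ioo_mem_nhds hx.1 hx.2)
      (fun y hy => hf y (Ioo_subset_Icc_self hy))
  exact (p.hasDerivAt x).congr_of_eventuallyEq hev

lemma deriv_eq_on_Ioo {a b : ℝ} {f : ℝ → ℝ} {p : Polynomial ℝ}
    (hf : ∀ x ∈ Icc a b, f x = p.eval x) {x : ℝ} (hx : x ∈ Ioo a b) :
    deriv f x = p.derivative.eval x :=
  (hasDerivAt_of_Icc hf hx).deriv

lemma deriv_sub_eq_on_Ioo {a b : ℝ} {v Iv : ℝ → ℝ} {p : Polynomial ℝ}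
    (hv : ContDiff ℝ (1:ℕ) v)
    (hIv : ∀ x ∈ Icc a b, Iv x = p.eval x) {x : ℝ} (hx : x ∈ Ioo a b) :
    deriv (fun y => v y - Iv y) x = deriv v x - p.derivative.eval x := by
  have h1 : HasDerivAt v (deriv v x) x :=
    ((hv.differentiable (by simp)) x).hasDerivAt
  have h2 : HasDerivAt Iv (p.derivative.eval x) x := hasDerivAt_of_Icc hIv hx
  exact (h1.sub h2).deriv

lemma cell_vanish (q : ℕ) {a b : ℝ} (hab : a < b)
    {v Iv S : ℝ → ℝ} (hv : ContDiff ℝ (1:ℕ) v)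
    {pI p : Polynomial ℝ}
    (hIv : ∀ x ∈ Icc a b, Iv x = pI.eval x)
    (hva : Iv a = v a) (hvb : Iv b = v b)
    (horth : ∀ ξ : Polynomial ℝ, ξ.natDegree + 2 ≤ q →
      ∫ x in a..b, (v x - Iv x) * ξ.eval x = 0)
    (hp : p.natDegree ≤ q)
    (hS : ∀ x ∈ Icc a b, S x = p.eval x) :
    ∫ x in a..b, deriv (fun y => v y - Iv y) x * deriv S x = 0 := by
  have hab' : a ≤ b := le_of_lt hab
  have hamem : a ∈ Icc a b := ⟨le_refl a, hab'⟩
  have hbmem : b ∈ Icc a b := ⟨hab', le_refl b⟩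
  have hv1 : Differentiable ℝ v := hv.differentiable (by simp)
  set g : ℝ → ℝ := fun x => v x - pI.eval x with hg
  set g' : ℝ → ℝ := fun x => deriv v x - pI.derivative.eval x with hg'
  set h : ℝ → ℝ := fun x => p.derivative.eval x with hh
  set h' : ℝ → ℝ := fun x => p.derivative.derivative.eval x with hh'
  have hvderiv : Continuous (deriv v) := hv.continuous_deriv (by exact_mod_cast le_refl 1)
  have hgderiv : ∀ x ∈ Set.uIcc a b, HasDerivAt g (g' x) x := fun x _ =>
    (hv1 x).hasDerivAt.sub (pI.hasDerivAt x)
  have hhderiv : ∀ x ∈ Set.uIcc a b, HasDerivAt h (h' x) x := fun x _ => p.derivative.hasDerivAt x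
  have hg'cont : Continuous g' := hvderiv.sub pI.derivative.continuous
  have hh'cont : Continuous h' := p.derivative.derivative.continuous
  have hgcont : Continuous g := hv.continuous.sub pI.continuous
  have hhcont : Continuous h := p.derivative.continuous
  have step1 : ∫ x in a..b, deriv (fun y => v y - Iv y) x * deriv S x
      = ∫ x in a..b, g' x * h x := by
    apply intInt_congr_Ioo hab'
    intro x hx
    rw [deriv_sub_eq_on_Ioo hv hIv hx, deriv_eq_on_Ioo hS hx]
  have ibp : ∫ x in a..b, (g' x * h x + g x * h' x) = g b * h b - g a * h a :=
    intervalIntegral.integral_deriv_mul_eq_sub hgderiv hhderiv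
      (hg'cont.intervalIntegrable a b) (hh'cont.intervalIntegrable a b)
  have hga : g a = 0 := by simp [hg, ← hIv a hamem, hva]
  have hgb : g b = 0 := by simp [hg, ← hIv b hbmem, hvb]
  have split : ∫ x in a..b, (g' x * h x + g x * h' x)
      = (∫ x in a..b, g' x * h x) + ∫ x in a..b, g x * h' x :=
    intervalIntegral.integral_add ((hg'cont.mul hhcont).intervalIntegrable a b)
      ((hgcont.mul hh'cont).intervalIntegrable a b)
  have step3 : ∫ x in a..b, g x * h' x = 0 := by
    have hcong : ∫ x in a..b, g x * h' x
        = ∫ x in a..b, (v x - Iv x) * p.derivative.derivative.eval x := by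
      apply intervalIntegral.integral_congr
      intro x hx
      rw [Set.uIcc_of_le hab'] at hx
      simp [hg, hh', hIv x hx]
    rw [hcong]
    by_cases h2q : 2 ≤ q
    · apply horth
      have d1 : p.derivative.natDegree ≤ q - 1 :=
        le_trans (Polynomial.natDegree_derivative_le p) (Nat.sub_le_sub_right hp 1)
      have d2 : p.derivative.derivative.natDegree ≤ q - 2 :=
        le_trans (Polynomial.natDegree_derivative_le _) (by omega)
      omega
    · have hd0 : p.derivative.natDegree = 0 :=
        Nat.le_zero.mp (le_trans (Polynomial.natDegree_derivative_le p) (by omega))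
      have : p.derivative = Polynomial.C (p.derivative.coeff 0) :=
        Polynomial.eq_C_of_natDegree_le_zero (le_of_eq hd0)
      rw [this]
      simp
  rw [step1]
  have h2 := ibp
  rw [split, hga, hgb] at h2
  simp only [zero_mul, sub_zero] at h2
  linarith [step3, h2]

lemma cell_ibp3 {a b : ℝ} (hab : a < b) {bc v Iv S : ℝ → ℝ}
    (hbc : ContDiff ℝ (⊤:ℕ∞) bc) (hv : ContDiff ℝ (1:ℕ) v)
    {pI p : Polynomial ℝ}
    (hIv : ∀ x ∈ Icc a b, Iv x = pI.eval x)
    (hva : Iv a = v a) (hvb : Iv b = v b)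
    (hS : ∀ x ∈ Icc a b, S x = p.eval x) :
    ∫ x in a..b, deriv bc x * deriv (fun y => v y - Iv y) x * S x
      = -(∫ x in a..b, (v x - Iv x) * (deriv (deriv bc) x * S x))
        - ∫ x in a..b, (v x - Iv x) * (deriv bc x * deriv S x) := by
  have hab' : a ≤ b := le_of_lt hab
  have hamem : a ∈ Icc a b := ⟨le_refl a, hab'⟩
  have hbmem : b ∈ Icc a b := ⟨hab', le_refl b⟩
  have hv1 : Differentiable ℝ v := hv.differentiable (by simp)
  have hbc' : ContDiff ℝ (⊤:ℕ∞) (deriv bc) := by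
    have := hbc.iterate_deriv 1
    simpa using this
  have hbccont : Continuous (deriv bc) := hbc'.continuous
  have hbc'' : Continuous (deriv (deriv bc)) := hbc'.continuous_deriv (by exact_mod_cast le_top)
  have hbcdiff : Differentiable ℝ (deriv bc) := hbc'.differentiable (by simp)
  set g : ℝ → ℝ := fun x => v x - pI.eval x with hg
  set g' : ℝ → ℝ := fun x => deriv v x - pI.derivative.eval x with hg'
  set h : ℝ → ℝ := fun x => deriv bc x * p.eval x with hh
  set h' : ℝ → ℝ := fun x => deriv (deriv bc) x * p.eval x + deriv bc x * p.derivative.eval x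
    with hh'
  have hvderiv : Continuous (deriv v) := hv.continuous_deriv (by exact_mod_cast le_refl 1)
  have hgderiv : ∀ x ∈ Set.uIcc a b, HasDerivAt g (g' x) x := fun x _ =>
    (hv1 x).hasDerivAt.sub (pI.hasDerivAt x)
  have hhderiv : ∀ x ∈ Set.uIcc a b, HasDerivAt h (h' x) x := fun x _ =>
    ((hbcdiff x).hasDerivAt).mul (p.hasDerivAt x)
  have hg'cont : Continuous g' := hvderiv.sub pI.derivative.continuous
  have hh'cont : Continuous h' :=
    (hbc''.mul p.continuous).add (hbccont.mul p.derivative.continuous)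
  have hgcont : Continuous g := hv.continuous.sub pI.continuous
  have hhcont : Continuous h := hbccont.mul p.continuous
  have step1 : ∫ x in a..b, deriv bc x * deriv (fun y => v y - Iv y) x * S x
      = ∫ x in a..b, g' x * h x := by
    apply intInt_congr_Ioo hab'
    intro x hx
    rw [deriv_sub_eq_on_Ioo hv hIv hx, hS x (Ioo_subset_Icc_self hx)]
    simp only [hg', hh]
    ring
  have ibp : ∫ x in a..b, (g' x * h x + g x * h' x) = g b * h b - g a * h a :=
    intervalIntegral.integral_deriv_mul_eq_sub hgderiv hhderiv
      (hg'cont.intervalIntegrable a b) (hh'cont.intervalIntegrable a b)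
  have hga : g a = 0 := by simp [hg, ← hIv a hamem, hva]
  have hgb : g b = 0 := by simp [hg, ← hIv b hbmem, hvb]
  have split : ∫ x in a..b, (g' x * h x + g x * h' x)
      = (∫ x in a..b, g' x * h x) + ∫ x in a..b, g x * h' x :=
    intervalIntegral.integral_add ((hg'cont.mul hhcont).intervalIntegrable a b)
      ((hgcont.mul hh'cont).intervalIntegrable a b)
  have split2 : ∫ x in a..b, g x * h' x
      = (∫ x in a..b, g x * (deriv (deriv bc) x * p.eval x))
        + ∫ x in a..b, g x * (deriv bc x * p.derivative.eval x) := by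
    rw [← intervalIntegral.integral_add (f := fun x => g x * (deriv (deriv bc) x * p.eval x))
      (g := fun x => g x * (deriv bc x * p.derivative.eval x))
      ((hgcont.mul (hbc''.mul p.continuous)).intervalIntegrable a b)
      ((hgcont.mul (hbccont.mul p.derivative.continuous)).intervalIntegrable a b)]
    apply intervalIntegral.integral_congr
    intro x _
    simp only [hh']
    ring
  have c1 : ∫ x in a..b, g x * (deriv (deriv bc) x * p.eval x)
      = ∫ x in a..b, (v x - Iv x) * (deriv (deriv bc) x * S x) := by
    apply intervalIntegral.integral_congr
    intro x hx
    rw [Set.uIcc_of_le hab'] at hx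
    simp only [hg]
    rw [hS x hx, hIv x hx]
  have c2 : ∫ x in a..b, g x * (deriv bc x * p.derivative.eval x)
      = ∫ x in a..b, (v x - Iv x) * (deriv bc x * deriv S x) := by
    apply intInt_congr_Ioo hab'
    intro x hx
    simp only [hg]
    rw [deriv_eq_on_Ioo hS hx, hIv x (Ioo_subset_Icc_self hx)]
  rw [step1]
  have h2 := ibp
  rw [split, hga, hgb] at h2
  simp only [zero_mul, sub_zero] at h2
  rw [split2, c1, c2] at h2
  linarith

lemma CS_interval {a b : ℝ} (hab : a ≤ b) {f g : ℝ → ℝ}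
    (hf2 : IntervalIntegrable (fun x => f x ^ 2) volume a b)
    (hg2 : IntervalIntegrable (fun x => g x ^ 2) volume a b)
    (hfg : IntervalIntegrable (fun x => f x * g x) volume a b) :
    ∫ x in a..b, f x * g x
      ≤ Real.sqrt (∫ x in a..b, f x ^ 2) * Real.sqrt (∫ x in a..b, g x ^ 2) := by
  set A := ∫ x in a..b, f x ^ 2 with hA
  set B := ∫ x in a..b, f x * g x with hB
  set Cc := ∫ x in a..b, g x ^ 2 with hCc
  have hA0 : 0 ≤ A := intervalIntegral.integral_nonneg hab (fun x _ => sq_nonneg _)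
  have hC0 : 0 ≤ Cc := intervalIntegral.integral_nonneg hab (fun x _ => sq_nonneg _)
  have key : ∀ t : ℝ, 0 ≤ A * (t * t) + (-2 * B) * t + Cc := by
    intro t
    have h1 : (0:ℝ) ≤ ∫ x in a..b, (t * f x - g x) ^ 2 :=
      intervalIntegral.integral_nonneg hab (fun x _ => sq_nonneg _)
    have h2 : ∫ x in a..b, (t * f x - g x) ^ 2
        = t^2 * A - 2 * t * B + Cc := by
      have hcong : ∫ x in a..b, (t * f x - g x) ^ 2
          = ∫ x in a..b, (t^2 * f x ^ 2 - 2 * t * (f x * g x) + g x ^ 2) := by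
        apply intervalIntegral.integral_congr
        intro x _
        ring
      rw [hcong, intervalIntegral.integral_add ((hf2.const_mul _).sub (hfg.const_mul _)) hg2,
        intervalIntegral.integral_sub (hf2.const_mul _) (hfg.const_mul _),
        intervalIntegral.integral_const_mul, intervalIntegral.integral_const_mul]
    nlinarith [h1, h2]
  have hd := discrim_le_zero key
  rw [discrim] at hd
  have hB2 : B ^ 2 ≤ A * Cc := by nlinarith [hd]
  calc B ≤ |B| := le_abs_self B
    _ = Real.sqrt (B ^ 2) := (Real.sqrt_sq_eq_abs B).symm
    _ ≤ Real.sqrt (A * Cc) := Real.sqrt_le_sqrt hB2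
    _ = Real.sqrt A * Real.sqrt Cc := Real.sqrt_mul hA0 _

lemma bound_wFG {a b : ℝ} (hab : a ≤ b) {M : ℝ} {w F G : ℝ → ℝ}
    (hw : ∀ x ∈ Icc a b, |w x| ≤ M)
    (hint : IntervalIntegrable (fun x => w x * F x * G x) volume a b)
    (hFG : IntervalIntegrable (fun x => |F x| * |G x|) volume a b)
    (hF2 : IntervalIntegrable (fun x => F x ^ 2) volume a b)
    (hG2 : IntervalIntegrable (fun x => G x ^ 2) volume a b) :
    ∫ x in a..b, w x * F x * G x
      ≤ M * (Real.sqrt (∫ x in a..b, F x ^ 2) * Real.sqrt (∫ x in a..b, G x ^ 2)) := by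
  have hM0 : 0 ≤ M := le_trans (abs_nonneg _) (hw a ⟨le_refl a, hab⟩)
  have step1 : ∫ x in a..b, w x * F x * G x ≤ ∫ x in a..b, |w x * F x * G x| := by
    calc ∫ x in a..b, w x * F x * G x ≤ |∫ x in a..b, w x * F x * G x| := le_abs_self _
      _ ≤ ∫ x in a..b, |w x * F x * G x| := intervalIntegral.abs_integral_le_integral_abs hab
  have step2 : ∫ x in a..b, |w x * F x * G x| ≤ ∫ x in a..b, M * (|F x| * |G x|) := by
    apply intervalIntegral.integral_mono_on hab hint.abs (hFG.const_mul M)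
    intro x hx
    rw [abs_mul, abs_mul]
    rw [mul_assoc]
    exact mul_le_mul_of_nonneg_right (hw x hx) (mul_nonneg (abs_nonneg _) (abs_nonneg _))
  have hF2' : IntervalIntegrable (fun x => |F x| ^ 2) volume a b := by
    have : (fun x => |F x| ^ 2) = fun x => F x ^ 2 := funext fun x => sq_abs _
    rw [this]; exact hF2
  have hG2' : IntervalIntegrable (fun x => |G x| ^ 2) volume a b := by
    have : (fun x => |G x| ^ 2) = fun x => G x ^ 2 := funext fun x => sq_abs _
    rw [this]; exact hG2
  have step3 : ∫ x in a..b, |F x| * |G x|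
      ≤ Real.sqrt (∫ x in a..b, F x ^ 2) * Real.sqrt (∫ x in a..b, G x ^ 2) := by
    have := CS_interval hab hF2' hG2' hFG
    simpa [sq_abs] using this
  calc ∫ x in a..b, w x * F x * G x ≤ ∫ x in a..b, M * (|F x| * |G x|) := le_trans step1 step2
    _ = M * ∫ x in a..b, |F x| * |G x| := intervalIntegral.integral_const_mul _ _
    _ ≤ M * (Real.sqrt (∫ x in a..b, F x ^ 2) * Real.sqrt (∫ x in a..b, G x ^ 2)) :=
        mul_le_mul_of_nonneg_left step3 hM0

lemma nodes_mono {N : ℕ} {nodes : ℕ → ℝ} (h : ∀ i < N, nodes i < nodes (i+1)) :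
    ∀ i j, i ≤ j → j ≤ N → nodes i ≤ nodes j := by
  intro i j hij hjN
  induction j with
  | zero =>
    have : i = 0 := Nat.le_zero.mp hij
    subst this; exact le_refl _
  | succ k ih =>
    rcases Nat.lt_or_ge i (k+1) with h1 | h2
    · have hik : i ≤ k := Nat.lt_succ_iff.mp h1
      exact le_trans (ih hik (le_trans (Nat.le_succ k) hjN)) (le_of_lt (h k (by omega)))
    · have : i = k+1 := le_antisymm hij h2
      subst this; exact le_refl _

end Helpers

open MeasureTheory intervalIntegral Polynomial

/-- Error estimation lemma (Lemma 2 of the paper): with `(η_u,η_w)` the interpolation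
errors and `(ξ_u,ξ_w) ∈ U_h` the discrete errors,
`B((η_u,η_w),(ξ_u,ξ_w)) ≲ (‖η_u‖ + ‖η_w‖ + ‖b-b̄‖_∞ ‖η_u'‖) |||(ξ_u,ξ_w)|||`,
where `b̄` is the cell-wise average of `b`. -/
theorem error_estimation_lemma
    (b c d : ℝ → ℝ) (β δ : ℝ) (m q : ℕ)
    (hm : m = 1 ∨ m = 2) (hq : 1 ≤ q)
    (hb : ContDiff ℝ (⊤:ℕ∞) b) (hc : ContDiff ℝ (⊤:ℕ∞) c) (hd : ContDiff ℝ (⊤:ℕ∞) d)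
    (hβ : 0 < β) (hδ : 0 < δ)
    (hbβ : ∀ x ∈ Icc (0:ℝ) 2, β^2 ≤ b x)
    (Md Mb' : ℝ)
    (hdM : ∀ x ∈ Icc (1:ℝ) 2, |d x| ≤ Md)
    (hb'M : ∀ x ∈ Icc (0:ℝ) 2, |deriv b x| ≤ Mb')
    (hcδ : ∀ x ∈ Icc (0:ℝ) 2, δ ≤ c x - Md/2 - Mb'^2/(2*β^2)) :
    ∃ C > 0, ∀ (ε : ℝ) (N : ℕ) (nodes : ℕ → ℝ) (bbar : ℝ → ℝ) (Mbb : ℝ)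
      (u w Iu Iw uh wh : ℝ → ℝ),
      0 < ε → ε ≤ 1 → 0 < N →
      nodes 0 = 0 → nodes N = 2 → (∀ i < N, nodes i < nodes (i+1)) →
      ContDiff ℝ (1:ℕ) u → ContDiff ℝ (1:ℕ) w →
      MemU m u w → MemU m uh wh →
      PiecewisePoly q N nodes uh → PiecewisePoly q N nodes wh →
      Interpolates q N nodes u Iu → Interpolates q N nodes w Iw →
      (∀ i < N, ∀ x ∈ Ico (nodes i) (nodes (i+1)),
        bbar x = (∫ t in (nodes i)..(nodes (i+1)), b t) / (nodes (i+1) - nodes i)) →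
      (∀ x ∈ Icc (0:ℝ) 2, |b x - bbar x| ≤ Mbb) →
      Bform ε b c d (fun x => u x - Iu x) (fun x => w x - Iw x)
          (fun x => uh x - Iu x) (fun x => wh x - Iw x)
        ≤ C * (L2 (fun x => u x - Iu x) 0 2 + L2 (fun x => w x - Iw x) 0 2
              + Mbb * L2 (fun x => deriv (fun t => u t - Iu t) x) 0 2)
            * Real.sqrt (energySq β δ (fun x => uh x - Iu x) (fun x => wh x - Iw x)) := by
  -- global constants
  have h02 : (0:ℝ) ≤ 2 := by norm_num
  have h12 : (1:ℝ) ≤ 2 := by norm_num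
  have hbc1 : ContDiff ℝ (⊤:ℕ∞) (deriv b) := by
    have := hb.iterate_deriv 1
    simpa using this
  have hbc2cont : Continuous (deriv (deriv b)) := hbc1.continuous_deriv (by exact_mod_cast le_top)
  obtain ⟨Mc0, hMc0⟩ := (isCompact_Icc (a := (0:ℝ)) (b := 2)).exists_bound_of_continuousOn
    hc.continuous.continuousOn
  obtain ⟨Mb20, hMb20⟩ := (isCompact_Icc (a := (0:ℝ)) (b := 2)).exists_bound_of_continuousOn
    hbc2cont.continuousOn
  set Mc : ℝ := max Mc0 0 with hMcdef
  set Mb2 : ℝ := max Mb20 0 with hMb2def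
  have hMcb : ∀ x ∈ Icc (0:ℝ) 2, |c x| ≤ Mc := fun x hx => le_trans
    (by simpa [Real.norm_eq_abs] using hMc0 x hx) (le_max_left _ _)
  have hMb2b : ∀ x ∈ Icc (0:ℝ) 2, |deriv (deriv b) x| ≤ Mb2 := fun x hx => le_trans
    (by simpa [Real.norm_eq_abs] using hMb20 x hx) (le_max_left _ _)
  have hMc0' : 0 ≤ Mc := le_max_right _ _
  have hMb20' : 0 ≤ Mb2 := le_max_right _ _
  have hMd0 : 0 ≤ Md := le_trans (abs_nonneg _) (hdM 1 ⟨le_refl 1, h12⟩)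
  have hMb'0 : 0 ≤ Mb' := le_trans (abs_nonneg _) (hb'M 0 ⟨le_refl 0, h02⟩)
  set κβ : ℝ := Real.sqrt (2/β^2) with hκβdef
  set κδ : ℝ := Real.sqrt (1/δ) with hκδdef
  have hκβ0 : 0 ≤ κβ := Real.sqrt_nonneg _
  have hκδ0 : 0 ≤ κδ := Real.sqrt_nonneg _
  set K1 : ℝ := Mb2*κδ + Mb'*κβ + Mc*κδ + Md*κδ with hK1def
  have hK10 : 0 ≤ K1 := by positivity
  refine ⟨K1 + κβ + 1, by positivity, ?_⟩
  intro ε N nodes bbar Mbb u w Iu Iw uh wh hε hε1 hN h0 h2 hnd hu hw hUuw hUh huhpp hwhpp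
    hIuI hIwI hbbar hMbb
  obtain ⟨hIupp, hIucont0, hIunode, hIuorth⟩ := hIuI
  obtain ⟨hIwpp, hIwcont0, hIwnode, hIworth⟩ := hIwI
  obtain ⟨huhcont, hwhcont, -, -, -⟩ := hUh
  -- mesh facts
  have hndle : ∀ i < N, nodes i ≤ nodes (i+1) := fun i hi => le_of_lt (hnd i hi)
  have hmono := nodes_mono hnd
  have hsub : ∀ i < N, Icc (nodes i) (nodes (i+1)) ⊆ Icc (0:ℝ) 2 := by
    intro i hi x hx
    constructor
    · rw [← h0]; exact le_trans (hmono 0 i (Nat.zero_le i) (le_of_lt hi)) hx.1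
    · rw [← h2]; exact le_trans hx.2 (hmono (i+1) N hi (le_refl N))
  -- polynomials
  choose! pIu hpIudeg hpIueval using hIupp
  choose! pIw hpIwdeg hpIweval using hIwpp
  choose! puh hpuhdeg hpuheval using huhpp
  choose! pwh hpwhdeg hpwheval using hwhpp
  set Pu : ℕ → Polynomial ℝ := fun i => puh i - pIu i with hPudef
  set Pw : ℕ → Polynomial ℝ := fun i => pwh i - pIw i with hPwdef
  have hPudeg : ∀ i < N, (Pu i).natDegree ≤ q := fun i hi => le_trans
    (Polynomial.natDegree_sub_le _ _) (max_le (hpuhdeg i hi) (hpIudeg i hi))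
  have hPwdeg : ∀ i < N, (Pw i).natDegree ≤ q := fun i hi => le_trans
    (Polynomial.natDegree_sub_le _ _) (max_le (hpwhdeg i hi) (hpIwdeg i hi))
  have hPueval : ∀ i < N, ∀ x ∈ Icc (nodes i) (nodes (i+1)),
      (fun y => uh y - Iu y) x = (Pu i).eval x := by
    intro i hi x hx
    simp only [hPudef, Polynomial.eval_sub]
    rw [hpuheval i hi x hx, hpIueval i hi x hx]
  have hPweval : ∀ i < N, ∀ x ∈ Icc (nodes i) (nodes (i+1)),
      (fun y => wh y - Iw y) x = (Pw i).eval x := by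
    intro i hi x hx
    simp only [hPwdef, Polynomial.eval_sub]
    rw [hpwheval i hi x hx, hpIweval i hi x hx]
  have hPueval' : ∀ i < N, ∀ x ∈ Icc (nodes i) (nodes (i+1)),
      uh x - Iu x = (Pu i).eval x := hPueval
  have hPweval' : ∀ i < N, ∀ x ∈ Icc (nodes i) (nodes (i+1)),
      wh x - Iw x = (Pw i).eval x := hPweval
  -- continuity
  have hIucont : ContinuousOn Iu (Icc (0:ℝ) 2) := by rwa [h0, h2] at hIucont0
  have hIwcont : ContinuousOn Iw (Icc (0:ℝ) 2) := by rwa [h0, h2] at hIwcont0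
  have hucont : Continuous u := hu.continuous
  have hwcont : Continuous w := hw.continuous
  have hu' : Continuous (deriv u) := hu.continuous_deriv (by exact_mod_cast le_refl 1)
  have hw' : Continuous (deriv w) := hw.continuous_deriv (by exact_mod_cast le_refl 1)
  have hb' : Continuous (deriv b) := hbc1.continuous
  have hηucont : ContinuousOn (fun x => u x - Iu x) (Icc (0:ℝ) 2) :=
    hucont.continuousOn.sub hIucont
  have hηwcont : ContinuousOn (fun x => w x - Iw x) (Icc (0:ℝ) 2) :=
    hwcont.continuousOn.sub hIwcont
  have hξucont : ContinuousOn (fun x => uh x - Iu x) (Icc (0:ℝ) 2) := huhcont.sub hIucont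
  have hξwcont : ContinuousOn (fun x => wh x - Iw x) (Icc (0:ℝ) 2) := hwhcont.sub hIwcont
  -- derivative representations on open cells
  have hDηu : ∀ i < N, ∀ x ∈ Ioo (nodes i) (nodes (i+1)),
      deriv (fun y => u y - Iu y) x = deriv u x - (pIu i).derivative.eval x :=
    fun i hi x hx => deriv_sub_eq_on_Ioo hu (hpIueval i hi) hx
  have hDηw : ∀ i < N, ∀ x ∈ Ioo (nodes i) (nodes (i+1)),
      deriv (fun y => w y - Iw y) x = deriv w x - (pIw i).derivative.eval x :=
    fun i hi x hx => deriv_sub_eq_on_Ioo hw (hpIweval i hi) hx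
  have hDξu : ∀ i < N, ∀ x ∈ Ioo (nodes i) (nodes (i+1)),
      deriv (fun y => uh y - Iu y) x = (Pu i).derivative.eval x :=
    fun i hi x hx => deriv_eq_on_Ioo (hPueval i hi) hx
  have hDξw : ∀ i < N, ∀ x ∈ Ioo (nodes i) (nodes (i+1)),
      deriv (fun y => wh y - Iw y) x = (Pw i).derivative.eval x :=
    fun i hi x hx => deriv_eq_on_Ioo (hPweval i hi) hx
  -- gluing machinery
  have hglue : ∀ f : ℝ → ℝ,
      (∀ i < N, IntervalIntegrable f volume (nodes i) (nodes (i+1))) →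
      IntervalIntegrable f volume 0 2 := by
    intro f hf
    have := IntervalIntegrable.trans_iterate hf
    rwa [h0, h2] at this
  have hsum : ∀ f : ℝ → ℝ,
      (∀ i < N, IntervalIntegrable f volume (nodes i) (nodes (i+1))) →
      ∫ x in (0:ℝ)..2, f x = ∑ i ∈ Finset.range N, ∫ x in (nodes i)..(nodes (i+1)), f x := by
    intro f hf
    have := intervalIntegral.sum_integral_adjacent_intervals hf
    rw [h0, h2] at this
    exact this.symm
  -- generic cell integrability from continuity on [0,2]
  have hIIsub : ∀ f : ℝ → ℝ, ContinuousOn f (Icc (0:ℝ) 2) → ∀ a' b' : ℝ,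
      0 ≤ a' → b' ≤ 2 → a' ≤ b' → IntervalIntegrable f volume a' b' := by
    intro f hf a' b' ha hb hab
    apply ContinuousOn.intervalIntegrable
    rw [Set.uIcc_of_le hab]
    exact hf.mono (Icc_subset_Icc ha hb)
  have hcell0 : ∀ i < N, (0:ℝ) ≤ nodes i := by
    intro i hi
    rw [← h0]; exact hmono 0 i (Nat.zero_le i) (le_of_lt hi)
  have hcell2 : ∀ i < N, nodes (i+1) ≤ 2 := by
    intro i hi
    rw [← h2]; exact hmono (i+1) N hi (le_refl N)
  -- cellwise interval integrability facts
  have hII_f1 : ∀ i < N, IntervalIntegrable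
      (fun x => deriv (fun y => w y - Iw y) x * deriv (fun y => uh y - Iu y) x)
      volume (nodes i) (nodes (i+1)) := by
    intro i hi
    refine II_congr_Ioo (hndle i hi) (fun x hx => ?_)
      (((hw'.sub (pIw i).derivative.continuous).mul
        (Pu i).derivative.continuous).intervalIntegrable _ _)
    rw [hDηw i hi x hx, hDξu i hi x hx]
    rfl
  have hII_f2 : ∀ i < N, IntervalIntegrable
      (fun x => deriv (fun y => u y - Iu y) x * deriv (fun y => wh y - Iw y) x)
      volume (nodes i) (nodes (i+1)) := by
    intro i hi
    refine II_congr_Ioo (hndle i hi) (fun x hx => ?_)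
      (((hu'.sub (pIu i).derivative.continuous).mul
        (Pw i).derivative.continuous).intervalIntegrable _ _)
    rw [hDηu i hi x hx, hDξw i hi x hx]
    rfl
  have hII_f3 : ∀ i < N, IntervalIntegrable
      (fun x => bbar x * (deriv (fun y => u y - Iu y) x * deriv (fun y => uh y - Iu y) x))
      volume (nodes i) (nodes (i+1)) := by
    intro i hi
    refine II_congr_Ioo (hndle i hi)
      (g := fun x => ((∫ t in (nodes i)..(nodes (i+1)), b t) / (nodes (i+1) - nodes i))
        * ((deriv u x - (pIu i).derivative.eval x) * (Pu i).derivative.eval x))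
      (fun x hx => ?_)
      ((continuous_const.mul ((hu'.sub (pIu i).derivative.continuous).mul
        (Pu i).derivative.continuous)).intervalIntegrable _ _)
    rw [hbbar i hi x (Ioo_subset_Ico_self hx), hDηu i hi x hx, hDξu i hi x hx]
  have hII_f4 : ∀ i < N, IntervalIntegrable
      (fun x => (b x - bbar x) * deriv (fun y => u y - Iu y) x * deriv (fun y => uh y - Iu y) x)
      volume (nodes i) (nodes (i+1)) := by
    intro i hi
    refine II_congr_Ioo (hndle i hi)
      (g := fun x => (b x - (∫ t in (nodes i)..(nodes (i+1)), b t) / (nodes (i+1) - nodes i))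
        * (deriv u x - (pIu i).derivative.eval x) * (Pu i).derivative.eval x)
      (fun x hx => ?_)
      ((((hb.continuous.sub continuous_const).mul
        (hu'.sub (pIu i).derivative.continuous)).mul
        (Pu i).derivative.continuous).intervalIntegrable _ _)
    rw [hbbar i hi x (Ioo_subset_Ico_self hx), hDηu i hi x hx, hDξu i hi x hx]
  have hII_f6 : ∀ i < N, IntervalIntegrable
      (fun x => deriv b x * deriv (fun y => u y - Iu y) x * (uh x - Iu x))
      volume (nodes i) (nodes (i+1)) := by
    intro i hi
    refine II_congr_Ioo (hndle i hi) (fun x hx => ?_)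
      (((hb'.mul (hu'.sub (pIu i).derivative.continuous)).mul
        (Pu i).continuous).intervalIntegrable _ _)
    rw [hDηu i hi x hx, hPueval' i hi x (Ioo_subset_Icc_self hx)]
    rfl
  have hII_f7 : ∀ i < N, IntervalIntegrable
      (fun x => (u x - Iu x) * (deriv b x * deriv (fun y => uh y - Iu y) x))
      volume (nodes i) (nodes (i+1)) := by
    intro i hi
    refine II_congr_Ioo (hndle i hi) (fun x hx => ?_)
      (((hucont.sub (pIu i).continuous).mul
        (hb'.mul (Pu i).derivative.continuous)).intervalIntegrable _ _)
    rw [hDξu i hi x hx, hpIueval i hi x (Ioo_subset_Icc_self hx)]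
    rfl
  have hII_s1 : ∀ i < N, IntervalIntegrable
      (fun x => deriv (fun y => u y - Iu y) x ^ 2) volume (nodes i) (nodes (i+1)) := by
    intro i hi
    refine II_congr_Ioo (hndle i hi) (fun x hx => ?_)
      (((hu'.sub (pIu i).derivative.continuous).pow 2).intervalIntegrable _ _)
    rw [hDηu i hi x hx]
    rfl
  have hII_s2 : ∀ i < N, IntervalIntegrable
      (fun x => deriv (fun y => uh y - Iu y) x ^ 2) volume (nodes i) (nodes (i+1)) := by
    intro i hi
    refine II_congr_Ioo (hndle i hi) (fun x hx => ?_)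
      (((Pu i).derivative.continuous.pow 2).intervalIntegrable _ _)
    rw [hDξu i hi x hx]
    rfl
  have hII_a1 : ∀ i < N, IntervalIntegrable
      (fun x => |deriv (fun y => u y - Iu y) x| * |deriv (fun y => uh y - Iu y) x|)
      volume (nodes i) (nodes (i+1)) := by
    intro i hi
    refine II_congr_Ioo (hndle i hi) (fun x hx => ?_)
      (((hu'.sub (pIu i).derivative.continuous).abs.mul
        (Pu i).derivative.continuous.abs).intervalIntegrable _ _)
    rw [hDηu i hi x hx, hDξu i hi x hx]
    rfl
  have hII_a2 : ∀ i < N, IntervalIntegrable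
      (fun x => |u x - Iu x| * |deriv (fun y => uh y - Iu y) x|)
      volume (nodes i) (nodes (i+1)) := by
    intro i hi
    refine II_congr_Ioo (hndle i hi) (fun x hx => ?_)
      (((hucont.sub (pIu i).continuous).abs.mul
        (Pu i).derivative.continuous.abs).intervalIntegrable _ _)
    rw [hDξu i hi x hx, hpIueval i hi x (Ioo_subset_Icc_self hx)]
    rfl
  have hII_t3b : ∀ i < N, IntervalIntegrable
      (fun x => (-(deriv b x)) * (u x - Iu x) * deriv (fun y => uh y - Iu y) x)
      volume (nodes i) (nodes (i+1)) := by
    intro i hi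
    refine II_congr_Ioo (hndle i hi) (fun x hx => ?_)
      (((hb'.neg.mul (hucont.sub (pIu i).continuous)).mul
        (Pu i).derivative.continuous).intervalIntegrable _ _)
    rw [hDξu i hi x hx, hpIueval i hi x (Ioo_subset_Icc_self hx)]
    rfl
  -- the three vanishing integrals
  have hV1 : ∫ x in (0:ℝ)..2, deriv (fun y => w y - Iw y) x * deriv (fun y => uh y - Iu y) x
      = 0 := by
    rw [hsum _ hII_f1]
    apply Finset.sum_eq_zero
    intro i hi
    have hi' : i < N := Finset.mem_range.mp hi
    exact cell_vanish q (hnd i hi') hw (hpIweval i hi') (hIwnode i (le_of_lt hi'))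
      (hIwnode (i+1) hi') (hIworth i hi') (hPudeg i hi') (hPueval i hi')
  have hV2 : ∫ x in (0:ℝ)..2, deriv (fun y => u y - Iu y) x * deriv (fun y => wh y - Iw y) x
      = 0 := by
    rw [hsum _ hII_f2]
    apply Finset.sum_eq_zero
    intro i hi
    have hi' : i < N := Finset.mem_range.mp hi
    exact cell_vanish q (hnd i hi') hu (hpIueval i hi') (hIunode i (le_of_lt hi'))
      (hIunode (i+1) hi') (hIuorth i hi') (hPwdeg i hi') (hPweval i hi')
  have hV3 : ∫ x in (0:ℝ)..2,
      bbar x * (deriv (fun y => u y - Iu y) x * deriv (fun y => uh y - Iu y) x) = 0 := by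
    rw [hsum _ hII_f3]
    apply Finset.sum_eq_zero
    intro i hi
    have hi' : i < N := Finset.mem_range.mp hi
    have hci : ∫ x in (nodes i)..(nodes (i+1)),
        bbar x * (deriv (fun y => u y - Iu y) x * deriv (fun y => uh y - Iu y) x)
        = ∫ x in (nodes i)..(nodes (i+1)),
          ((∫ t in (nodes i)..(nodes (i+1)), b t) / (nodes (i+1) - nodes i))
            * (deriv (fun y => u y - Iu y) x * deriv (fun y => uh y - Iu y) x) := by
      apply intInt_congr_Ioo (hndle i hi')
      intro x hx
      rw [hbbar i hi' x (Ioo_subset_Ico_self hx)]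
    rw [hci, intervalIntegral.integral_const_mul]
    rw [cell_vanish q (hnd i hi') hu (hpIueval i hi') (hIunode i (le_of_lt hi'))
      (hIunode (i+1) hi') (hIuorth i hi') (hPudeg i hi') (hPueval i hi'), mul_zero]
  -- split of the convection term
  have hT2split : ∫ x in (0:ℝ)..2,
        b x * deriv (fun y => u y - Iu y) x * deriv (fun y => uh y - Iu y) x
      = ∫ x in (0:ℝ)..2,
        (b x - bbar x) * deriv (fun y => u y - Iu y) x * deriv (fun y => uh y - Iu y) x := by
    have hcong : ∫ x in (0:ℝ)..2,
        b x * deriv (fun y => u y - Iu y) x * deriv (fun y => uh y - Iu y) x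
        = ∫ x in (0:ℝ)..2,
          ((b x - bbar x) * deriv (fun y => u y - Iu y) x * deriv (fun y => uh y - Iu y) x
            + bbar x * (deriv (fun y => u y - Iu y) x * deriv (fun y => uh y - Iu y) x)) := by
      apply intervalIntegral.integral_congr
      intro x _
      ring
    rw [hcong, intervalIntegral.integral_add (hglue _ hII_f4) (hglue _ hII_f3), hV3, add_zero]
  -- integration by parts identity for the b' term
  have hT3 : ∫ x in (0:ℝ)..2, deriv b x * deriv (fun y => u y - Iu y) x * (uh x - Iu x)
      = -(∫ x in (0:ℝ)..2, (u x - Iu x) * (deriv (deriv b) x * (uh x - Iu x)))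
        - ∫ x in (0:ℝ)..2, (u x - Iu x) * (deriv b x * deriv (fun y => uh y - Iu y) x) := by
    have hII_f3a : ∀ i < N, IntervalIntegrable
        (fun x => (u x - Iu x) * (deriv (deriv b) x * (uh x - Iu x)))
        volume (nodes i) (nodes (i+1)) := by
      intro i hi
      exact hIIsub _ (hηucont.mul (hbc2cont.continuousOn.mul hξucont))
        _ _ (hcell0 i hi) (hcell2 i hi) (hndle i hi)
    calc ∫ x in (0:ℝ)..2, deriv b x * deriv (fun y => u y - Iu y) x * (uh x - Iu x)
        = ∑ i ∈ Finset.range N, ∫ x in (nodes i)..(nodes (i+1)),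
            deriv b x * deriv (fun y => u y - Iu y) x * (uh x - Iu x) := hsum _ hII_f6
      _ = ∑ i ∈ Finset.range N,
            (-(∫ x in (nodes i)..(nodes (i+1)),
                (u x - Iu x) * (deriv (deriv b) x * (uh x - Iu x)))
              - ∫ x in (nodes i)..(nodes (i+1)),
                (u x - Iu x) * (deriv b x * deriv (fun y => uh y - Iu y) x)) := by
          apply Finset.sum_congr rfl
          intro i hi
          have hi' : i < N := Finset.mem_range.mp hi
          have hIB := cell_ibp3 (hnd i hi') hb hu (hpIueval i hi')
            (hIunode i (le_of_lt hi')) (hIunode (i+1) hi')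
            (hS := fun x hx => hPueval i hi' x hx)
          exact hIB
      _ = -(∑ i ∈ Finset.range N, ∫ x in (nodes i)..(nodes (i+1)),
              (u x - Iu x) * (deriv (deriv b) x * (uh x - Iu x)))
          - ∑ i ∈ Finset.range N, ∫ x in (nodes i)..(nodes (i+1)),
              (u x - Iu x) * (deriv b x * deriv (fun y => uh y - Iu y) x) := by
          rw [Finset.sum_sub_distrib, ← Finset.sum_neg_distrib]
      _ = -(∫ x in (0:ℝ)..2, (u x - Iu x) * (deriv (deriv b) x * (uh x - Iu x)))
          - ∫ x in (0:ℝ)..2, (u x - Iu x) * (deriv b x * deriv (fun y => uh y - Iu y) x) := by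
          rw [← hsum _ hII_f3a, ← hsum _ hII_f7]
  -- helper for integrability on [1,2]
  have hIIsub12 : ∀ f : ℝ → ℝ, ContinuousOn f (Icc (1:ℝ) 2) →
      IntervalIntegrable f volume 1 2 := by
    intro f hf
    apply ContinuousOn.intervalIntegrable
    rwa [Set.uIcc_of_le h12]
  have hshiftcont : ContinuousOn (fun x => u (x-1) - Iu (x-1)) (Icc (1:ℝ) 2) := by
    have hmap : MapsTo (fun x : ℝ => x - 1) (Icc (1:ℝ) 2) (Icc (0:ℝ) 2) := by
      intro x hx
      simp only [mem_Icc] at hx ⊢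
      constructor
      · linarith [hx.1]
      · linarith [hx.2]
    exact hηucont.comp ((continuous_sub_right (1:ℝ)).continuousOn) hmap
  -- shorthand names
  set Su : ℝ := ∫ x in (0:ℝ)..2, (u x - Iu x)^2 with hSudef
  set Sw : ℝ := ∫ x in (0:ℝ)..2, (w x - Iw x)^2 with hSwdef
  set S1 : ℝ := ∫ x in (0:ℝ)..2, deriv (fun t => u t - Iu t) x ^ 2 with hS1def
  set A1 : ℝ := ∫ x in (0:ℝ)..2, (wh x - Iw x)^2 with hA1def
  set A2 : ℝ := ∫ x in (0:ℝ)..2, deriv (fun y => uh y - Iu y) x ^ 2 with hA2def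
  set A3 : ℝ := ∫ x in (0:ℝ)..2, (uh x - Iu x)^2 with hA3def
  set Eq : ℝ := A1 + β^2/2 * A2 + δ * A3 with hEqdef
  set E : ℝ := Real.sqrt Eq with hEdef
  have hA10 : 0 ≤ A1 := intervalIntegral.integral_nonneg h02 (fun x _ => sq_nonneg _)
  have hA20 : 0 ≤ A2 := intervalIntegral.integral_nonneg h02 (fun x _ => sq_nonneg _)
  have hA30 : 0 ≤ A3 := intervalIntegral.integral_nonneg h02 (fun x _ => sq_nonneg _)
  have hβ2 : (0:ℝ) < β^2 := by positivity
  have hEq0 : 0 ≤ Eq := by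
    have h1 : 0 ≤ β^2/2 * A2 := by positivity
    have h2 : 0 ≤ δ * A3 := by positivity
    simp only [hEqdef]; linarith
  have hE0 : 0 ≤ E := Real.sqrt_nonneg _
  have hsu0 : 0 ≤ Real.sqrt Su := Real.sqrt_nonneg _
  have hsw0 : 0 ≤ Real.sqrt Sw := Real.sqrt_nonneg _
  have hs10 : 0 ≤ Real.sqrt S1 := Real.sqrt_nonneg _
  have hMbb0 : 0 ≤ Mbb := le_trans (abs_nonneg _) (hMbb 0 ⟨le_refl 0, h02⟩)
  have hsA1 : Real.sqrt A1 ≤ E := by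
    apply Real.sqrt_le_sqrt
    have h1 : 0 ≤ β^2/2 * A2 := by positivity
    have h2 : 0 ≤ δ * A3 := by positivity
    simp only [hEqdef]; linarith
  have hsA2 : Real.sqrt A2 ≤ κβ * E := by
    have h1 : A2 ≤ (2/β^2) * Eq := by
      have h3 : β^2/2 * A2 ≤ Eq := by
        have h4 : 0 ≤ δ * A3 := by positivity
        simp only [hEqdef]; linarith
      have h5 : A2 = (2/β^2) * (β^2/2 * A2) := by field_simp
      rw [h5]
      exact mul_le_mul_of_nonneg_left h3 (by positivity)
    calc Real.sqrt A2 ≤ Real.sqrt ((2/β^2) * Eq) := Real.sqrt_le_sqrt h1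
      _ = κβ * E := by rw [hκβdef, hEdef, Real.sqrt_mul (by positivity)]
  have hsA3 : Real.sqrt A3 ≤ κδ * E := by
    have h1 : A3 ≤ (1/δ) * Eq := by
      have h3 : δ * A3 ≤ Eq := by
        have h4 : 0 ≤ β^2/2 * A2 := by positivity
        simp only [hEqdef]; linarith
      have h5 : A3 = (1/δ) * (δ * A3) := by field_simp
      rw [h5]
      exact mul_le_mul_of_nonneg_left h3 (by positivity)
    calc Real.sqrt A3 ≤ Real.sqrt ((1/δ) * Eq) := Real.sqrt_le_sqrt h1
      _ = κδ * E := by rw [hκδdef, hEdef, Real.sqrt_mul (by positivity)]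
  -- term bounds
  have hB2 : ∫ x in (0:ℝ)..2,
        (b x - bbar x) * deriv (fun y => u y - Iu y) x * deriv (fun y => uh y - Iu y) x
      ≤ Mbb * (Real.sqrt S1 * Real.sqrt A2) := by
    exact bound_wFG h02 hMbb (hglue _ hII_f4) (hglue _ hII_a1) (hglue _ hII_s1) (hglue _ hII_s2)
  have hT3a : -(∫ x in (0:ℝ)..2, (u x - Iu x) * (deriv (deriv b) x * (uh x - Iu x)))
      ≤ Mb2 * (Real.sqrt Su * Real.sqrt A3) := by
    have e : -(∫ x in (0:ℝ)..2, (u x - Iu x) * (deriv (deriv b) x * (uh x - Iu x)))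
        = ∫ x in (0:ℝ)..2, (-(deriv (deriv b) x)) * (u x - Iu x) * (uh x - Iu x) := by
      rw [← intervalIntegral.integral_neg]
      apply intervalIntegral.integral_congr
      intro x _
      ring
    rw [e]
    exact bound_wFG h02 (fun x hx => by rw [abs_neg]; exact hMb2b x hx)
      (hIIsub _ (((hbc2cont.continuousOn.neg.mul hηucont).mul hξucont)) _ _ le_rfl le_rfl h02)
      (hIIsub _ (hηucont.abs.mul hξucont.abs) _ _ le_rfl le_rfl h02)
      (hIIsub _ (hηucont.pow 2) _ _ le_rfl le_rfl h02)
      (hIIsub _ (hξucont.pow 2) _ _ le_rfl le_rfl h02)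
  have hT3b : -(∫ x in (0:ℝ)..2, (u x - Iu x) * (deriv b x * deriv (fun y => uh y - Iu y) x))
      ≤ Mb' * (Real.sqrt Su * Real.sqrt A2) := by
    have e : -(∫ x in (0:ℝ)..2, (u x - Iu x) * (deriv b x * deriv (fun y => uh y - Iu y) x))
        = ∫ x in (0:ℝ)..2, (-(deriv b x)) * (u x - Iu x) * deriv (fun y => uh y - Iu y) x := by
      rw [← intervalIntegral.integral_neg]
      apply intervalIntegral.integral_congr
      intro x _
      ring
    rw [e]
    exact bound_wFG h02 (fun x hx => by rw [abs_neg]; exact hb'M x hx)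
      (hglue _ hII_t3b) (hglue _ hII_a2)
      (hIIsub _ (hηucont.pow 2) _ _ le_rfl le_rfl h02)
      (hglue _ hII_s2)
  have hT4 : ∫ x in (0:ℝ)..2, c x * (u x - Iu x) * (uh x - Iu x)
      ≤ Mc * (Real.sqrt Su * Real.sqrt A3) := by
    exact bound_wFG h02 hMcb
      (hIIsub _ ((hc.continuous.continuousOn.mul hηucont).mul hξucont) _ _ le_rfl le_rfl h02)
      (hIIsub _ (hηucont.abs.mul hξucont.abs) _ _ le_rfl le_rfl h02)
      (hIIsub _ (hηucont.pow 2) _ _ le_rfl le_rfl h02)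
      (hIIsub _ (hξucont.pow 2) _ _ le_rfl le_rfl h02)
  -- the delay term
  have hξucont12 : ContinuousOn (fun x => uh x - Iu x) (Icc (1:ℝ) 2) :=
    hξucont.mono (Icc_subset_Icc (by norm_num) (le_refl 2))
  -- the delay term
  have hT5 : ∫ x in (1:ℝ)..2, d x * (u (x-1) - Iu (x-1)) * (uh x - Iu x)
      ≤ Md * (Real.sqrt (∫ x in (1:ℝ)..2, (u (x-1) - Iu (x-1))^2)
          * Real.sqrt (∫ x in (1:ℝ)..2, (uh x - Iu x)^2)) :=
    bound_wFG h12 hdM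
      (hIIsub12 _ ((hd.continuous.continuousOn.mul hshiftcont).mul hξucont12))
      (hIIsub12 _ (hshiftcont.abs.mul hξucont12.abs))
      (hIIsub12 _ (hshiftcont.pow 2))
      (hIIsub12 _ (hξucont12.pow 2))
  have hshift_eq : ∫ x in (1:ℝ)..2, (u (x-1) - Iu (x-1))^2
      = ∫ x in (0:ℝ)..1, (u x - Iu x)^2 := by
    have h := intervalIntegral.integral_comp_sub_right
      (a := (1:ℝ)) (b := 2) (fun y => (u y - Iu y)^2) 1
    norm_num at h
    convert h using 2
  have h01le : ∫ x in (0:ℝ)..1, (u x - Iu x)^2 ≤ Su := by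
    have ha : IntervalIntegrable (fun x => (u x - Iu x)^2) volume 0 1 :=
      hIIsub _ (hηucont.pow 2) 0 1 le_rfl (by norm_num) (by norm_num)
    have hb2 : IntervalIntegrable (fun x => (u x - Iu x)^2) volume 1 2 :=
      hIIsub _ (hηucont.pow 2) 1 2 (by norm_num) le_rfl h12
    have hadd := intervalIntegral.integral_add_adjacent_intervals ha hb2
    have hpos : 0 ≤ ∫ x in (1:ℝ)..2, (u x - Iu x)^2 :=
      intervalIntegral.integral_nonneg h12 (fun x _ => sq_nonneg _)
    simp only [hSudef]
    linarith
  have h12A3 : ∫ x in (1:ℝ)..2, (uh x - Iu x)^2 ≤ A3 := by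
    have ha : IntervalIntegrable (fun x => (uh x - Iu x)^2) volume 0 1 :=
      hIIsub _ (hξucont.pow 2) 0 1 le_rfl (by norm_num) (by norm_num)
    have hb2 : IntervalIntegrable (fun x => (uh x - Iu x)^2) volume 1 2 :=
      hIIsub _ (hξucont.pow 2) 1 2 (by norm_num) le_rfl h12
    have hadd := intervalIntegral.integral_add_adjacent_intervals ha hb2
    have hpos : 0 ≤ ∫ x in (0:ℝ)..1, (uh x - Iu x)^2 :=
      intervalIntegral.integral_nonneg (by norm_num) (fun x _ => sq_nonneg _)
    simp only [hA3def]
    linarith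
  have hT5' : ∫ x in (1:ℝ)..2, d x * (u (x-1) - Iu (x-1)) * (uh x - Iu x)
      ≤ Md * (Real.sqrt Su * Real.sqrt A3) := by
    refine le_trans hT5 (mul_le_mul_of_nonneg_left ?_ hMd0)
    apply mul_le_mul
    · apply Real.sqrt_le_sqrt
      rw [hshift_eq]
      exact h01le
    · exact Real.sqrt_le_sqrt h12A3
    · exact Real.sqrt_nonneg _
    · exact hsu0
  -- the last term
  have hT7 : ∫ x in (0:ℝ)..2, (w x - Iw x) * (wh x - Iw x)
      ≤ Real.sqrt Sw * Real.sqrt A1 :=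
    CS_interval h02
      (hIIsub _ (hηwcont.pow 2) _ _ le_rfl le_rfl h02)
      (hIIsub _ (hξwcont.pow 2) _ _ le_rfl le_rfl h02)
      (hIIsub _ (hηwcont.mul hξwcont) _ _ le_rfl le_rfl h02)
  -- combine with energy bounds
  have c2 : ∫ x in (0:ℝ)..2,
        (b x - bbar x) * deriv (fun y => u y - Iu y) x * deriv (fun y => uh y - Iu y) x
      ≤ Mbb * Real.sqrt S1 * κβ * E := by
    calc _ ≤ Mbb * (Real.sqrt S1 * Real.sqrt A2) := hB2
      _ ≤ Mbb * (Real.sqrt S1 * (κβ * E)) :=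
          mul_le_mul_of_nonneg_left (mul_le_mul_of_nonneg_left hsA2 hs10) hMbb0
      _ = Mbb * Real.sqrt S1 * κβ * E := by ring
  have c3a : -(∫ x in (0:ℝ)..2, (u x - Iu x) * (deriv (deriv b) x * (uh x - Iu x)))
      ≤ Mb2 * Real.sqrt Su * κδ * E := by
    calc _ ≤ Mb2 * (Real.sqrt Su * Real.sqrt A3) := hT3a
      _ ≤ Mb2 * (Real.sqrt Su * (κδ * E)) :=
          mul_le_mul_of_nonneg_left (mul_le_mul_of_nonneg_left hsA3 hsu0) hMb20'
      _ = Mb2 * Real.sqrt Su * κδ * E := by ring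
  have c3b : -(∫ x in (0:ℝ)..2, (u x - Iu x) * (deriv b x * deriv (fun y => uh y - Iu y) x))
      ≤ Mb' * Real.sqrt Su * κβ * E := by
    calc _ ≤ Mb' * (Real.sqrt Su * Real.sqrt A2) := hT3b
      _ ≤ Mb' * (Real.sqrt Su * (κβ * E)) :=
          mul_le_mul_of_nonneg_left (mul_le_mul_of_nonneg_left hsA2 hsu0) hMb'0
      _ = Mb' * Real.sqrt Su * κβ * E := by ring
  have c4 : ∫ x in (0:ℝ)..2, c x * (u x - Iu x) * (uh x - Iu x)
      ≤ Mc * Real.sqrt Su * κδ * E := by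
    calc _ ≤ Mc * (Real.sqrt Su * Real.sqrt A3) := hT4
      _ ≤ Mc * (Real.sqrt Su * (κδ * E)) :=
          mul_le_mul_of_nonneg_left (mul_le_mul_of_nonneg_left hsA3 hsu0) hMc0'
      _ = Mc * Real.sqrt Su * κδ * E := by ring
  have c5 : ∫ x in (1:ℝ)..2, d x * (u (x-1) - Iu (x-1)) * (uh x - Iu x)
      ≤ Md * Real.sqrt Su * κδ * E := by
    calc _ ≤ Md * (Real.sqrt Su * Real.sqrt A3) := hT5'
      _ ≤ Md * (Real.sqrt Su * (κδ * E)) :=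
          mul_le_mul_of_nonneg_left (mul_le_mul_of_nonneg_left hsA3 hsu0) hMd0
      _ = Md * Real.sqrt Su * κδ * E := by ring
  have c7 : ∫ x in (0:ℝ)..2, (w x - Iw x) * (wh x - Iw x) ≤ Real.sqrt Sw * E := by
    calc _ ≤ Real.sqrt Sw * Real.sqrt A1 := hT7
      _ ≤ Real.sqrt Sw * E := mul_le_mul_of_nonneg_left hsA1 hsw0
  -- the target right-hand side
  set T : ℝ := Real.sqrt Su + Real.sqrt Sw + Mbb * Real.sqrt S1 with hTdef
  have hT0 : 0 ≤ T := by
    have := mul_nonneg hMbb0 hs10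
    simp only [hTdef]; linarith
  have hsuT : Real.sqrt Su ≤ T := by
    have := mul_nonneg hMbb0 hs10
    simp only [hTdef]; linarith
  have hswT : Real.sqrt Sw ≤ T := by
    have := mul_nonneg hMbb0 hs10
    simp only [hTdef]; linarith
  have hmT : Mbb * Real.sqrt S1 ≤ T := by
    simp only [hTdef]; linarith
  have hRHS : K1 * Real.sqrt Su * E + Real.sqrt Sw * E + κβ * (Mbb * Real.sqrt S1) * E
      ≤ (K1 + κβ + 1) * T * E := by
    have e1 : K1 * Real.sqrt Su * E ≤ K1 * T * E :=
      mul_le_mul_of_nonneg_right (mul_le_mul_of_nonneg_left hsuT hK10) hE0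
    have e2 : Real.sqrt Sw * E ≤ T * E := mul_le_mul_of_nonneg_right hswT hE0
    have e3 : κβ * (Mbb * Real.sqrt S1) * E ≤ κβ * T * E :=
      mul_le_mul_of_nonneg_right (mul_le_mul_of_nonneg_left hmT hκβ0) hE0
    have e4 : (K1 + κβ + 1) * T * E = K1 * T * E + T * E + κβ * T * E := by ring
    linarith
  have hsum4 : Mb2 * Real.sqrt Su * κδ * E + Mb' * Real.sqrt Su * κβ * E
      + Mc * Real.sqrt Su * κδ * E + Md * Real.sqrt Su * κδ * E
      = K1 * Real.sqrt Su * E := by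
    rw [hK1def]; ring
  -- unfold the goal and conclude
  simp only [Bform, L2, energySq]
  rw [hV1, hV2, hT2split, hT3]
  rw [← hSudef, ← hSwdef, ← hS1def, ← hA1def, ← hA2def, ← hA3def, ← hEqdef, ← hEdef]
  have hc2 : κβ * (Mbb * Real.sqrt S1) * E = Mbb * Real.sqrt S1 * κβ * E := by ring
  simp only [mul_zero, neg_zero, zero_add, add_zero]
  rw [← hTdef]
  linarith [c2, c3a, c3b, c4, c5, c7, hRHS, hsum4, hc2, hTdef]
end
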